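/- arXiv:2001.11933 — 2 statements merged into one kernel-verified Lean document; each statement's English description precedes it below -/
import Mathlib

section
/- For all p, q ∈ ℝ³ one has the vector identity g(p,q)² (p⁰ + q⁰)(p + q) + 4[ p(−p⁰|q|² + q⁰ (p·q)) + q(−q⁰|p|² + p⁰ (p·q)) ] = s(p,q) (p⁰ − q⁰)(p − q) in ℝ³. -/
noncomputable section

/-- Euclidean inner product on ℝ³. -/
def dot3 (p q : Fin 3 → ℝ) : ℝ := ∑ i, p i * q i

/-- The relativistic energy `p⁰ = √(m²c² + |p|²)`. -/
noncomputable def pZero (m c : ℝ) (p : Fin 3 → ℝ) : ℝ :=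
  Real.sqrt (m ^ 2 * c ^ 2 + dot3 p p)

lemma dot3_self_nonneg (p : Fin 3 → ℝ) : 0 ≤ dot3 p p := by
  unfold dot3
  exact Finset.sum_nonneg fun i _ => mul_self_nonneg _

lemma pZero_sq (m c : ℝ) (p : Fin 3 → ℝ) :
    pZero m c p ^ 2 = m ^ 2 * c ^ 2 + dot3 p p := by
  unfold pZero
  have h := dot3_self_nonneg p
  rw [Real.sq_sqrt (by positivity)]

/-- For all `p, q ∈ ℝ³`, in ℝ³:
`g² (p⁰ + q⁰)(p + q) + 4[p(−p⁰|q|² + q⁰(p·q)) + q(−q⁰|p|² + p⁰(p·q))] = s (p⁰ − q⁰)(p − q)`,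
where `s = 2(p⁰q⁰ − p·q + m²c²)` and `g² = 2(p⁰q⁰ − p·q − m²c²)`. -/
theorem stmt1 (m c : ℝ) (hm : 0 < m) (hc : 0 < c) (p q : Fin 3 → ℝ) :
    (2 * (pZero m c p * pZero m c q - dot3 p q - m ^ 2 * c ^ 2) *
        (pZero m c p + pZero m c q)) • (p + q)
      + (4 : ℝ) •
          ((-(pZero m c p) * dot3 q q + pZero m c q * dot3 p q) • p
            + (-(pZero m c q) * dot3 p p + pZero m c p * dot3 p q) • q)
    = (2 * (pZero m c p * pZero m c q - dot3 p q + m ^ 2 * c ^ 2) *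
        (pZero m c p - pZero m c q)) • (p - q) := by
  have ha := pZero_sq m c p
  have hb := pZero_sq m c q
  funext i
  simp only [Pi.add_apply, Pi.sub_apply, Pi.smul_apply, smul_eq_mul]
  linear_combination (4 * pZero m c p * p i) * hb + (4 * pZero m c q * q i) * ha
end
end

section
/- There exist constants T̄ > 0 and C > 0, depending only on m, c and K, such that for all τ with |τ − t| ≤ T̄, all p ∈ ℝ³ and all i, j ∈ {1,2,3}, the second τ-derivative of the momentum derivative of the spatial characteristic satisfies |d²/dτ² ∂_{p_i} X_j(τ; t, x, p)| ≤ C c / (p⁰)². -/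
noncomputable section

lemma dot3_expand (a b : Fin 3 → ℝ) : dot3 a b = a 0 * b 0 + a 1 * b 1 + a 2 * b 2 := by
  simp [dot3, Fin.sum_univ_three]

lemma dot3_nonneg (a : Fin 3 → ℝ) : 0 ≤ dot3 a a := by
  rw [dot3_expand]; nlinarith [sq_nonneg (a 0), sq_nonneg (a 1), sq_nonneg (a 2)]

lemma abs_le_norm3 (a : Fin 3 → ℝ) (k : Fin 3) : |a k| ≤ ‖a‖ := by
  simpa using norm_le_pi_norm a k

lemma norm3_le (a : Fin 3 → ℝ) {A : ℝ} (hA : 0 ≤ A) (h : ∀ k, |a k| ≤ A) : ‖a‖ ≤ A := by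
  apply pi_norm_le_iff_of_nonneg hA |>.2
  intro i; simpa using h i

lemma dot3_abs_le (a b : Fin 3 → ℝ) {A B : ℝ} (ha : ∀ k, |a k| ≤ A) (hb : ∀ k, |b k| ≤ B) :
    |dot3 a b| ≤ 3 * (A * B) := by
  rw [dot3_expand]
  have h0 := abs_mul (a 0) (b 0); have h1 := abs_mul (a 1) (b 1); have h2 := abs_mul (a 2) (b 2)
  have : ∀ k, |a k * b k| ≤ A * B := by
    intro k; rw [abs_mul]
    exact mul_le_mul (ha k) (hb k) (abs_nonneg _) ((abs_nonneg _).trans (ha k))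
  calc |a 0 * b 0 + a 1 * b 1 + a 2 * b 2| ≤ |a 0 * b 0| + |a 1 * b 1| + |a 2 * b 2| := by
        exact (abs_add_le _ _).trans (by gcongr; exact abs_add_le _ _)
    _ ≤ A * B + A * B + A * B := by gcongr <;> exact this _
    _ = 3 * (A * B) := by ring

lemma cross3_apply (a b : Fin 3 → ℝ) (k : Fin 3) :
    crossProduct a b k = a (k + 1) * b (k + 2) - a (k + 2) * b (k + 1) := by
  fin_cases k <;> simp [crossProduct]

lemma clm_bound (T : (Fin 3 → ℝ) →L[ℝ] ℝ) {K : ℝ} (h : ∀ i, |T (Pi.single i 1)| ≤ K)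
    (v : Fin 3 → ℝ) : |T v| ≤ 3 * K * ‖v‖ := by
  have hv : v = ∑ i : Fin 3, v i • (Pi.single i 1 : Fin 3 → ℝ) := by
    funext k
    simp [Finset.sum_apply, Pi.single_apply, Fin.sum_univ_three]
  have hTv : T v = ∑ i : Fin 3, v i * T (Pi.single i 1) := by
    conv_lhs => rw [hv]
    rw [map_sum]; simp [map_smul]
  rw [hTv]
  calc |∑ i : Fin 3, v i * T (Pi.single i 1)| ≤ ∑ i : Fin 3, |v i * T (Pi.single i 1)| :=
        Finset.abs_sum_le_sum_abs _ _
    _ ≤ ∑ _i : Fin 3, ‖v‖ * K := by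
        apply Finset.sum_le_sum
        intro i _
        rw [abs_mul]
        exact mul_le_mul (abs_le_norm3 v i) (h i) (abs_nonneg _) (norm_nonneg _)
    _ = 3 * K * ‖v‖ := by simp [Fin.sum_univ_three]; ring

section sfun
variable {m c : ℝ}

lemma wpos (hm : 0 < m) (hc : 0 < c) (v : Fin 3 → ℝ) : 0 < m^2*c^2 + dot3 v v := by
  nlinarith [dot3_nonneg v, mul_pos (mul_pos hm hm) (mul_pos hc hc)]

lemma sqrtw_pos (hm : 0 < m) (hc : 0 < c) (v : Fin 3 → ℝ) :
    0 < Real.sqrt (m^2*c^2 + dot3 v v) := Real.sqrt_pos.2 (wpos hm hc v)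

lemma sqrtw_ge (hm : 0 < m) (hc : 0 < c) (v : Fin 3 → ℝ) :
    m * c ≤ Real.sqrt (m^2*c^2 + dot3 v v) := by
  rw [show m^2*c^2 = (m*c)^2 by ring]
  calc m*c = Real.sqrt ((m*c)^2) := by
        rw [Real.sqrt_sq (by positivity)]
    _ ≤ _ := Real.sqrt_le_sqrt (by nlinarith [dot3_nonneg v])

lemma abs_le_sqrtw (hm : 0 < m) (hc : 0 < c) (v : Fin 3 → ℝ) (k : Fin 3) :
    |v k| ≤ Real.sqrt (m^2*c^2 + dot3 v v) := by
  rw [show |v k| = Real.sqrt ((v k)^2) by rw [Real.sqrt_sq_eq_abs]]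
  apply Real.sqrt_le_sqrt
  have h1 : v k * v k ≤ dot3 v v :=
    Finset.single_le_sum (f := fun i => v i * v i) (fun i _ => mul_self_nonneg (v i))
      (Finset.mem_univ k)
  nlinarith [mul_pos (mul_pos hm hm) (mul_pos hc hc)]

lemma sfun_le (hm : 0 < m) (hc : 0 < c) (v : Fin 3 → ℝ) :
    (Real.sqrt (m^2*c^2 + dot3 v v))⁻¹ ≤ (m*c)⁻¹ :=
  inv_anti₀ (by positivity) (sqrtw_ge hm hc v)

lemma sfun_nonneg (v : Fin 3 → ℝ) : 0 ≤ (Real.sqrt (m^2*c^2 + dot3 v v))⁻¹ := by positivity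

lemma sfun_mul_sqrt (hm : 0 < m) (hc : 0 < c) (v : Fin 3 → ℝ) :
    (Real.sqrt (m^2*c^2 + dot3 v v))⁻¹ * Real.sqrt (m^2*c^2 + dot3 v v) = 1 :=
  inv_mul_cancel₀ (ne_of_gt (sqrtw_pos hm hc v))

lemma contDiff_sfun (hm : 0 < m) (hc : 0 < c) {n : ℕ∞} :
    ContDiff ℝ n (fun v : Fin 3 → ℝ => (Real.sqrt (m^2*c^2 + dot3 v v))⁻¹) := by
  have hdot : ContDiff ℝ n (fun v : Fin 3 → ℝ => m^2*c^2 + dot3 v v) := by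
    simp only [dot3_expand]
    exact contDiff_const.add
      ((((ContinuousLinearMap.proj 0 : (Fin 3 → ℝ) →L[ℝ] ℝ).contDiff.mul
        (ContinuousLinearMap.proj 0 : (Fin 3 → ℝ) →L[ℝ] ℝ).contDiff).add
        ((ContinuousLinearMap.proj 1 : (Fin 3 → ℝ) →L[ℝ] ℝ).contDiff.mul
        (ContinuousLinearMap.proj 1 : (Fin 3 → ℝ) →L[ℝ] ℝ).contDiff)).add
        ((ContinuousLinearMap.proj 2 : (Fin 3 → ℝ) →L[ℝ] ℝ).contDiff.mul
        (ContinuousLinearMap.proj 2 : (Fin 3 → ℝ) →L[ℝ] ℝ).contDiff))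
  rw [contDiff_iff_contDiffAt]
  intro v
  exact ((Real.contDiffAt_sqrt (ne_of_gt (wpos hm hc v))).comp v hdot.contDiffAt).inv
    (ne_of_gt (sqrtw_pos hm hc v))

lemma hasDerivAt_dotw {Pc : ℝ → Fin 3 → ℝ} {F : Fin 3 → ℝ} {r : ℝ}
    (hk : ∀ k, HasDerivAt (fun ρ => Pc ρ k) (F k) r) :
    HasDerivAt (fun ρ => m^2*c^2 + dot3 (Pc ρ) (Pc ρ)) (2 * dot3 (Pc r) F) r := by
  have h := (hasDerivAt_const r (m^2*c^2)).add
    ((((hk 0).mul (hk 0)).add ((hk 1).mul (hk 1))).add ((hk 2).mul (hk 2)))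
  have e1 : (fun ρ => m^2*c^2 + (Pc ρ 0 * Pc ρ 0 + Pc ρ 1 * Pc ρ 1 + Pc ρ 2 * Pc ρ 2))
      = fun ρ => m^2*c^2 + dot3 (Pc ρ) (Pc ρ) := by
    funext ρ; rw [dot3_expand]
  rw [← e1]
  refine h.congr_deriv ?_
  rw [dot3_expand]; ring

lemma hasDerivAt_sfun (hm : 0 < m) (hc : 0 < c) {Pc : ℝ → Fin 3 → ℝ} {F : Fin 3 → ℝ} {r : ℝ}
    (hk : ∀ k, HasDerivAt (fun ρ => Pc ρ k) (F k) r) :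
    HasDerivAt (fun ρ => (Real.sqrt (m^2*c^2 + dot3 (Pc ρ) (Pc ρ)))⁻¹)
      (-(((Real.sqrt (m^2*c^2 + dot3 (Pc r) (Pc r)))⁻¹)^3 * dot3 (Pc r) F)) r := by
  have hw := wpos hm hc (Pc r)
  have hs := sqrtw_pos hm hc (Pc r)
  have h1 := ((hasDerivAt_dotw (m := m) (c := c) hk).sqrt (ne_of_gt hw)).inv (ne_of_gt hs)
  refine h1.congr_deriv ?_
  have hsq : Real.sqrt (m^2*c^2 + dot3 (Pc r) (Pc r)) ^ 2 = m^2*c^2 + dot3 (Pc r) (Pc r) :=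
    Real.sq_sqrt (le_of_lt hw)
  field_simp

end sfun

open ContinuousLinearMap in
theorem swapDeriv {E : Type*} [NormedAddCommGroup E] [NormedSpace ℝ E]
    (f g : ℝ × E → ℝ) (hf : ContDiff ℝ 2 f) (hg : Differentiable ℝ g)
    (hfg : ∀ (s : ℝ) (q : E), HasDerivAt (fun σ => f (σ, q)) (g (s, q)) s)
    (σ : ℝ) (p v : E) :
    HasDerivAt (fun s => fderiv ℝ (fun q => f (s, q)) p v)
      (fderiv ℝ (fun q => g (σ, q)) p v) σ := by
  have hfd : Differentiable ℝ f := hf.differentiable two_ne_zero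
  have hDf : ContDiff ℝ 1 (fderiv ℝ f) := hf.fderiv_right (le_refl _)
  have hD : DifferentiableAt ℝ (fderiv ℝ f) (σ, p) := (hDf.differentiable one_ne_zero) _
  have h1 : ∀ s : ℝ, fderiv ℝ (fun q => f (s, q)) p v = fderiv ℝ f (s, p) (0, v) := by
    intro s
    have h : HasFDerivAt (fun q => f (s, q))
        ((fderiv ℝ f (s, p)).comp (inr ℝ ℝ E)) p :=
      (hfd (s, p)).hasFDerivAt.comp p (hasFDerivAt_prodMk_right s p)
    rw [h.fderiv]; rfl
  have hgf : ∀ u : ℝ × E, g u = fderiv ℝ f u (1, 0) := by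
    intro u
    have hcurve : HasDerivAt (fun s : ℝ => ((s, u.2) : ℝ × E)) (1, 0) u.1 :=
      (hasDerivAt_id u.1).prodMk (hasDerivAt_const u.1 u.2)
    have h2 : HasDerivAt (fun s => f (s, u.2)) (fderiv ℝ f u (1, 0)) u.1 := by
      simpa [Function.comp_def] using (hfd u).hasFDerivAt.comp_hasDerivAt u.1 hcurve
    exact (hfg u.1 u.2).unique h2
  have hcurve : HasDerivAt (fun s : ℝ => ((s, p) : ℝ × E)) (1, 0) σ :=
    (hasDerivAt_id σ).prodMk (hasDerivAt_const σ p)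
  have h3 : HasDerivAt (fun s => fderiv ℝ f (s, p))
      (fderiv ℝ (fderiv ℝ f) (σ, p) (1, 0)) σ := by
    simpa [Function.comp_def] using hD.hasFDerivAt.comp_hasDerivAt σ hcurve
  have key : HasDerivAt (fun s => fderiv ℝ f (s, p) (0, v))
      (fderiv ℝ (fderiv ℝ f) (σ, p) (1, 0) (0, v)) σ :=
    (ContinuousLinearMap.apply ℝ ℝ ((0, v) : ℝ × E)).hasFDerivAt.comp_hasDerivAt σ h3
  have hsymm : fderiv ℝ (fderiv ℝ f) (σ, p) (1, 0) (0, v)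
      = fderiv ℝ (fderiv ℝ f) (σ, p) (0, v) (1, 0) :=
    (hf.contDiffAt.isSymmSndFDerivAt (by norm_num)) (1, 0) (0, v)
  have h4 : fderiv ℝ (fun u : ℝ × E => fderiv ℝ f u (1, 0)) (σ, p) (0, v)
      = fderiv ℝ (fderiv ℝ f) (σ, p) (0, v) (1, 0) := by
    have h : HasFDerivAt (fun u : ℝ × E => fderiv ℝ f u (1, 0))
        ((ContinuousLinearMap.apply ℝ ℝ ((1, 0) : ℝ × E)).comp
          (fderiv ℝ (fderiv ℝ f) (σ, p))) (σ, p) :=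
      (ContinuousLinearMap.apply ℝ ℝ ((1, 0) : ℝ × E)).hasFDerivAt.comp _ hD.hasFDerivAt
    rw [h.fderiv]; rfl
  have h5 : fderiv ℝ (fun q => g (σ, q)) p v = fderiv ℝ g (σ, p) (0, v) := by
    have h : HasFDerivAt (fun q => g (σ, q))
        ((fderiv ℝ g (σ, p)).comp (inr ℝ ℝ E)) p :=
      (hg (σ, p)).hasFDerivAt.comp p (hasFDerivAt_prodMk_right σ p)
    rw [h.fderiv]; rfl
  have h6 : fderiv ℝ g (σ, p) = fderiv ℝ (fun u : ℝ × E => fderiv ℝ f u (1, 0)) (σ, p) := by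
    congr 1; exact funext hgf
  have : fderiv ℝ (fun q => g (σ, q)) p v = fderiv ℝ (fderiv ℝ f) (σ, p) (1, 0) (0, v) := by
    rw [h5, h6, h4, hsymm]
  rw [this]
  simpa only [h1] using key

section main
variable (m c : ℝ) (E B X P : ℝ → (Fin 3 → ℝ) → Fin 3 → ℝ)

/-- reciprocal of P⁰ -/
def sfn (v : Fin 3 → ℝ) : ℝ := (Real.sqrt (m^2*c^2 + dot3 v v))⁻¹

/-- j-component of the velocity c P/P⁰, as a function of (τ,q). -/
def Gfun (j : Fin 3) (u : ℝ × (Fin 3 → ℝ)) : ℝ :=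
  c * (P u.1 u.2 j * sfn m c (P u.1 u.2))

/-- k-component of the Lorentz force, as a function of (τ,q). -/
def Fofun (k : Fin 3) (u : ℝ × (Fin 3 → ℝ)) : ℝ :=
  -(E u.1 (X u.1 u.2) k) -
    (sfn m c (P u.1 u.2) * P u.1 u.2 (k+1) * B u.1 (X u.1 u.2) (k+2)
      - sfn m c (P u.1 u.2) * P u.1 u.2 (k+2) * B u.1 (X u.1 u.2) (k+1))

/-- j-component of the acceleration d/dτ (c P/P⁰). -/
def hfun (j : Fin 3) (u : ℝ × (Fin 3 → ℝ)) : ℝ :=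
  c * (Fofun m c E B X P j u * sfn m c (P u.1 u.2)
    - P u.1 u.2 j * dot3 (P u.1 u.2) (fun k => Fofun m c E B X P k u) * (sfn m c (P u.1 u.2))^3)

lemma Fo_eq (τ : ℝ) (q : Fin 3 → ℝ) (k : Fin 3) :
    (-(E τ (X τ q)) - crossProduct (sfn m c (P τ q) • P τ q) (B τ (X τ q))) k
      = Fofun m c E B X P k (τ, q) := by
  simp only [Pi.sub_apply, Pi.neg_apply, cross3_apply, Pi.smul_apply, smul_eq_mul, Fofun]

variable {m c E B X P}

lemma contDiff_sfnP (hm : 0 < m) (hc : 0 < c) {n : ℕ∞}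
    (hP : ContDiff ℝ n (fun z : ℝ × (Fin 3 → ℝ) => P z.1 z.2)) :
    ContDiff ℝ n (fun u : ℝ × (Fin 3 → ℝ) => sfn m c (P u.1 u.2)) :=
  (contDiff_sfun hm hc).comp hP

lemma contDiff_comp_proj {n : ℕ∞} (k : Fin 3)
    (hP : ContDiff ℝ n (fun z : ℝ × (Fin 3 → ℝ) => P z.1 z.2)) :
    ContDiff ℝ n (fun z : ℝ × (Fin 3 → ℝ) => P z.1 z.2 k) :=
  (ContinuousLinearMap.proj k : (Fin 3 → ℝ) →L[ℝ] ℝ).contDiff.comp hP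

lemma contDiff_G (hm : 0 < m) (hc : 0 < c)
    (hP : ContDiff ℝ 2 (fun z : ℝ × (Fin 3 → ℝ) => P z.1 z.2)) (j : Fin 3) :
    ContDiff ℝ 2 (Gfun m c P j) :=
  contDiff_const.mul ((contDiff_comp_proj j hP).mul (contDiff_sfnP hm hc hP))

lemma contDiff_EX {n : ℕ∞} (k : Fin 3)
    (hE : ContDiff ℝ n (fun z : ℝ × (Fin 3 → ℝ) => E z.1 z.2))
    (hX : ContDiff ℝ n (fun z : ℝ × (Fin 3 → ℝ) => X z.1 z.2)) :
    ContDiff ℝ n (fun u : ℝ × (Fin 3 → ℝ) => E u.1 (X u.1 u.2) k) :=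
  ((ContinuousLinearMap.proj k : (Fin 3 → ℝ) →L[ℝ] ℝ).contDiff.comp hE).comp
    (contDiff_fst.prodMk hX)

lemma contDiff_Fo (hm : 0 < m) (hc : 0 < c)
    (hE : ContDiff ℝ 1 (fun z : ℝ × (Fin 3 → ℝ) => E z.1 z.2))
    (hB : ContDiff ℝ 1 (fun z : ℝ × (Fin 3 → ℝ) => B z.1 z.2))
    (hX : ContDiff ℝ 2 (fun z : ℝ × (Fin 3 → ℝ) => X z.1 z.2))
    (hP : ContDiff ℝ 2 (fun z : ℝ × (Fin 3 → ℝ) => P z.1 z.2)) (k : Fin 3) :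
    ContDiff ℝ 1 (Fofun m c E B X P k) := by
  have hX1 := hX.of_le one_le_two
  have hP1 := hP.of_le one_le_two
  exact ((contDiff_EX k hE hX1).neg).sub
    ((((contDiff_sfnP hm hc hP1).mul (contDiff_comp_proj _ hP1)).mul
        (contDiff_EX _ hB hX1)).sub
      (((contDiff_sfnP hm hc hP1).mul (contDiff_comp_proj _ hP1)).mul
        (contDiff_EX _ hB hX1)))

lemma contDiff_h (hm : 0 < m) (hc : 0 < c)
    (hE : ContDiff ℝ 1 (fun z : ℝ × (Fin 3 → ℝ) => E z.1 z.2))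
    (hB : ContDiff ℝ 1 (fun z : ℝ × (Fin 3 → ℝ) => B z.1 z.2))
    (hX : ContDiff ℝ 2 (fun z : ℝ × (Fin 3 → ℝ) => X z.1 z.2))
    (hP : ContDiff ℝ 2 (fun z : ℝ × (Fin 3 → ℝ) => P z.1 z.2)) (j : Fin 3) :
    ContDiff ℝ 1 (hfun m c E B X P j) := by
  have hP1 := hP.of_le one_le_two
  have hdot : ContDiff ℝ 1 (fun u : ℝ × (Fin 3 → ℝ) =>
      dot3 (P u.1 u.2) (fun k => Fofun m c E B X P k u)) := by
    simp only [dot3_expand]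
    exact (((contDiff_comp_proj 0 hP1).mul (contDiff_Fo hm hc hE hB hX hP 0)).add
      ((contDiff_comp_proj 1 hP1).mul (contDiff_Fo hm hc hE hB hX hP 1))).add
      ((contDiff_comp_proj 2 hP1).mul (contDiff_Fo hm hc hE hB hX hP 2))
  exact contDiff_const.mul
    (((contDiff_Fo hm hc hE hB hX hP j).mul (contDiff_sfnP hm hc hP1)).sub
      (((contDiff_comp_proj j hP1).mul hdot).mul ((contDiff_sfnP hm hc hP1).pow 3)))

/-- ODE for X, componentwise, with value `Gfun`. -/
lemma Xode_comp
    (hXode : ∀ τ q, HasDerivAt (fun σ => X σ q)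
      ((c / Real.sqrt (m ^ 2 * c ^ 2 + dot3 (P τ q) (P τ q))) • P τ q) τ)
    (τ : ℝ) (q : Fin 3 → ℝ) (j : Fin 3) :
    HasDerivAt (fun σ => X σ q j) (Gfun m c P j (τ, q)) τ := by
  have h := (ContinuousLinearMap.proj j : (Fin 3 → ℝ) →L[ℝ] ℝ).hasFDerivAt.comp_hasDerivAt
    τ (hXode τ q)
  refine h.congr_deriv ?_
  simp [Gfun, sfn, div_eq_mul_inv]
  ring

lemma Pode_comp
    (hPode : ∀ τ q, HasDerivAt (fun σ => P σ q)
      (-(E τ (X τ q)) - crossProduct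
        ((Real.sqrt (m ^ 2 * c ^ 2 + dot3 (P τ q) (P τ q)))⁻¹ • P τ q) (B τ (X τ q))) τ)
    (τ : ℝ) (q : Fin 3 → ℝ) (k : Fin 3) :
    HasDerivAt (fun σ => P σ q k) (Fofun m c E B X P k (τ, q)) τ := by
  have h := (ContinuousLinearMap.proj k : (Fin 3 → ℝ) →L[ℝ] ℝ).hasFDerivAt.comp_hasDerivAt
    τ (hPode τ q)
  refine h.congr_deriv ?_
  exact Fo_eq m c E B X P τ q k

/-- ODE for the velocity: d/dσ Gfun = hfun. -/
lemma Gode (hm : 0 < m) (hc : 0 < c)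
    (hPode : ∀ τ q, HasDerivAt (fun σ => P σ q)
      (-(E τ (X τ q)) - crossProduct
        ((Real.sqrt (m ^ 2 * c ^ 2 + dot3 (P τ q) (P τ q)))⁻¹ • P τ q) (B τ (X τ q))) τ)
    (τ : ℝ) (q : Fin 3 → ℝ) (j : Fin 3) :
    HasDerivAt (fun σ => Gfun m c P j (σ, q)) (hfun m c E B X P j (τ, q)) τ := by
  have hk : ∀ k, HasDerivAt (fun σ => P σ q k) (Fofun m c E B X P k (τ, q)) τ :=
    Pode_comp hPode τ q
  have hs := hasDerivAt_sfun (m := m) (c := c) hm hc (Pc := fun σ => P σ q)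
    (F := fun k => Fofun m c E B X P k (τ, q)) (r := τ) hk
  have h := (((hk j).mul hs).const_mul c)
  refine h.congr_deriv ?_
  simp only [hfun, sfn]
  ring

/-- the line r ↦ p + r eᵢ -/
def lineP (p : Fin 3 → ℝ) (i : Fin 3) (r : ℝ) : Fin 3 → ℝ := p + r • (Pi.single i 1 : Fin 3 → ℝ)

lemma lineP_zero (p : Fin 3 → ℝ) (i : Fin 3) : lineP p i 0 = p := by
  simp [lineP]

lemma hasDerivAt_lineP (p : Fin 3 → ℝ) (i : Fin 3) :
    HasDerivAt (lineP p i) (Pi.single i 1) 0 := by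
  have h := ((hasDerivAt_id (0:ℝ)).smul_const (Pi.single i 1 : Fin 3 → ℝ)).const_add p
  unfold lineP
  simpa using h

/-- directional derivative along the line equals fderiv applied to eᵢ -/
lemma hasDerivAt_along_line {f : ℝ × (Fin 3 → ℝ) → ℝ} (hf : Differentiable ℝ f)
    (σ : ℝ) (p : Fin 3 → ℝ) (i : Fin 3) :
    HasDerivAt (fun r => f (σ, lineP p i r))
      (fderiv ℝ (fun q => f (σ, q)) p (Pi.single i 1)) 0 := by
  have hq : DifferentiableAt ℝ (fun q => f (σ, q)) p :=
    (hf (σ, p)).comp p ((differentiableAt_const σ).prodMk differentiableAt_id)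
  have hq' : HasFDerivAt (fun q => f (σ, q)) (fderiv ℝ (fun q => f (σ, q)) p) (lineP p i 0) :=
    (lineP_zero p i).symm ▸ hq.hasFDerivAt
  exact hq'.comp_hasDerivAt 0 (hasDerivAt_lineP p i)

section main2
variable {m c : ℝ} {E B X P : ℝ → (Fin 3 → ℝ) → Fin 3 → ℝ}

/-- momentum derivative of X -/
def Yv (X : ℝ → (Fin 3 → ℝ) → Fin 3 → ℝ) (σ : ℝ) (p : Fin 3 → ℝ) (i : Fin 3) : Fin 3 → ℝ :=
  fun j => fderiv ℝ (fun q => X σ q j) p (Pi.single i 1)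

lemma hasDerivAt_lineF (hX : ContDiff ℝ 2 (fun z : ℝ × (Fin 3 → ℝ) => X z.1 z.2))
    (σ : ℝ) (p : Fin 3 → ℝ) (i : Fin 3) :
    HasDerivAt (fun r => X σ (lineP p i r)) (Yv X σ p i) 0 := by
  apply hasDerivAt_pi.2
  intro j
  exact hasDerivAt_along_line ((contDiff_comp_proj j hX).differentiable (by norm_num)) σ p i

lemma hasDerivAt_line_sfn (hm : 0 < m) (hc : 0 < c)
    (hP : ContDiff ℝ 2 (fun z : ℝ × (Fin 3 → ℝ) => P z.1 z.2))
    (σ : ℝ) (p : Fin 3 → ℝ) (i : Fin 3) :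
    HasDerivAt (fun r => sfn m c (P σ (lineP p i r)))
      (-((sfn m c (P σ p))^3 * dot3 (P σ p) (Yv P σ p i))) 0 := by
  have h := hasDerivAt_sfun (m := m) (c := c) hm hc (Pc := fun r => P σ (lineP p i r))
    (F := Yv P σ p i) (r := 0) (fun k => hasDerivAt_pi.1 (hasDerivAt_lineF hP σ p i) k)
  simpa [sfn, lineP_zero] using h

/-- value of the q-derivative of Gfun, i.e. the RHS of the ODE for Y -/
lemma fderiv_G_val (hm : 0 < m) (hc : 0 < c)
    (hP : ContDiff ℝ 2 (fun z : ℝ × (Fin 3 → ℝ) => P z.1 z.2))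
    (σ : ℝ) (p : Fin 3 → ℝ) (i j : Fin 3) :
    fderiv ℝ (fun q => Gfun m c P j (σ, q)) p (Pi.single i 1)
      = c * (Yv P σ p i j * sfn m c (P σ p)
          - P σ p j * (sfn m c (P σ p))^3 * dot3 (P σ p) (Yv P σ p i)) := by
  have h1 := hasDerivAt_along_line
    ((contDiff_G hm hc hP j).differentiable two_ne_zero) σ p i
  have hPj := hasDerivAt_pi.1 (hasDerivAt_lineF hP σ p i) j
  have h2 := ((hPj.mul (hasDerivAt_line_sfn hm hc hP σ p i)).const_mul c)
  have e : (fun r => Gfun m c P j (σ, lineP p i r))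
      = fun r => c * (P σ (lineP p i r) j * sfn m c (P σ (lineP p i r))) := rfl
  rw [e] at h1
  have := h1.unique h2
  rw [this, lineP_zero]
  ring

end main2

section main3
variable {m c : ℝ} {E B X P : ℝ → (Fin 3 → ℝ) → Fin 3 → ℝ}

/-- spatial gradient of field applied to Yv -/
def aEv (E X : ℝ → (Fin 3 → ℝ) → Fin 3 → ℝ) (σ : ℝ) (p : Fin 3 → ℝ) (i k : Fin 3) : ℝ :=
  fderiv ℝ (fun y => E σ y k) (X σ p) (Yv X σ p i)

lemma hasDerivAt_line_EX
    (hE : ContDiff ℝ 1 (fun z : ℝ × (Fin 3 → ℝ) => E z.1 z.2))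
    (hX : ContDiff ℝ 2 (fun z : ℝ × (Fin 3 → ℝ) => X z.1 z.2))
    (σ : ℝ) (p : Fin 3 → ℝ) (i k : Fin 3) :
    HasDerivAt (fun r => E σ (X σ (lineP p i r)) k) (aEv E X σ p i k) 0 := by
  have hEy : DifferentiableAt ℝ (fun y => E σ y k) (X σ p) :=
    (((contDiff_comp_proj k hE).differentiable (by norm_num)) (σ, X σ p)).comp (X σ p)
      ((differentiableAt_const σ).prodMk differentiableAt_id)
  have hEy' : HasFDerivAt (fun y => E σ y k) (fderiv ℝ (fun y => E σ y k) (X σ p))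
      (X σ (lineP p i 0)) := by rw [lineP_zero]; exact hEy.hasFDerivAt
  exact hEy'.comp_hasDerivAt 0 (hasDerivAt_lineF hX σ p i)

lemma fderiv_Fo_val (hm : 0 < m) (hc : 0 < c)
    (hE : ContDiff ℝ 1 (fun z : ℝ × (Fin 3 → ℝ) => E z.1 z.2))
    (hB : ContDiff ℝ 1 (fun z : ℝ × (Fin 3 → ℝ) => B z.1 z.2))
    (hX : ContDiff ℝ 2 (fun z : ℝ × (Fin 3 → ℝ) => X z.1 z.2))
    (hP : ContDiff ℝ 2 (fun z : ℝ × (Fin 3 → ℝ) => P z.1 z.2))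
    (σ : ℝ) (p : Fin 3 → ℝ) (i k : Fin 3) :
    fderiv ℝ (fun q => Fofun m c E B X P k (σ, q)) p (Pi.single i 1)
      = -(aEv E X σ p i k)
        - (((-((sfn m c (P σ p))^3 * dot3 (P σ p) (Yv P σ p i))) * P σ p (k+1)
              + sfn m c (P σ p) * Yv P σ p i (k+1)) * B σ (X σ p) (k+2)
            + sfn m c (P σ p) * P σ p (k+1) * aEv B X σ p i (k+2)
          - (((-((sfn m c (P σ p))^3 * dot3 (P σ p) (Yv P σ p i))) * P σ p (k+2)
              + sfn m c (P σ p) * Yv P σ p i (k+2)) * B σ (X σ p) (k+1)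
            + sfn m c (P σ p) * P σ p (k+2) * aEv B X σ p i (k+1))) := by
  have h1 := hasDerivAt_along_line
    ((contDiff_Fo hm hc hE hB hX hP k).differentiable one_ne_zero) σ p i
  have sline := hasDerivAt_line_sfn hm hc hP σ p i
  have Pl : ∀ l, HasDerivAt (fun r => P σ (lineP p i r) l) (Yv P σ p i l) 0 :=
    fun l => hasDerivAt_pi.1 (hasDerivAt_lineF hP σ p i) l
  have Bl := fun l => hasDerivAt_line_EX hB hX σ p i l
  have El := hasDerivAt_line_EX hE hX σ p i k
  have h2 := (El.neg).sub
    ((((sline.mul (Pl (k+1))).mul (Bl (k+2)))).sub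
      (((sline.mul (Pl (k+2))).mul (Bl (k+1)))))
  have e : (fun r => Fofun m c E B X P k (σ, lineP p i r))
      = fun r => -(E σ (X σ (lineP p i r)) k) -
          (sfn m c (P σ (lineP p i r)) * P σ (lineP p i r) (k+1) * B σ (X σ (lineP p i r)) (k+2)
            - sfn m c (P σ (lineP p i r)) * P σ (lineP p i r) (k+2)
              * B σ (X σ (lineP p i r)) (k+1)) := rfl
  rw [e] at h1
  have := h1.unique h2
  rw [this, lineP_zero]
  simp only [Pi.mul_apply, lineP_zero]

lemma fderiv_h_val (hm : 0 < m) (hc : 0 < c)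
    (hE : ContDiff ℝ 1 (fun z : ℝ × (Fin 3 → ℝ) => E z.1 z.2))
    (hB : ContDiff ℝ 1 (fun z : ℝ × (Fin 3 → ℝ) => B z.1 z.2))
    (hX : ContDiff ℝ 2 (fun z : ℝ × (Fin 3 → ℝ) => X z.1 z.2))
    (hP : ContDiff ℝ 2 (fun z : ℝ × (Fin 3 → ℝ) => P z.1 z.2))
    (σ : ℝ) (p : Fin 3 → ℝ) (i j : Fin 3) :
    fderiv ℝ (fun q => hfun m c E B X P j (σ, q)) p (Pi.single i 1)
      = c * ((fderiv ℝ (fun q => Fofun m c E B X P j (σ, q)) p (Pi.single i 1))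
              * sfn m c (P σ p)
          + Fofun m c E B X P j (σ, p) * (-((sfn m c (P σ p))^3 * dot3 (P σ p) (Yv P σ p i)))
          - (Yv P σ p i j * dot3 (P σ p) (fun k => Fofun m c E B X P k (σ, p))
                * (sfn m c (P σ p))^3
            + P σ p j * (dot3 (Yv P σ p i) (fun k => Fofun m c E B X P k (σ, p))
                + dot3 (P σ p) (fun k => fderiv ℝ (fun q => Fofun m c E B X P k (σ, q)) p
                    (Pi.single i 1))) * (sfn m c (P σ p))^3
            + P σ p j * dot3 (P σ p) (fun k => Fofun m c E B X P k (σ, p))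
                * (3 * (sfn m c (P σ p))^2
                  * (-((sfn m c (P σ p))^3 * dot3 (P σ p) (Yv P σ p i)))))) := by
  have h1 := hasDerivAt_along_line
    ((contDiff_h hm hc hE hB hX hP j).differentiable one_ne_zero) σ p i
  have sline := hasDerivAt_line_sfn hm hc hP σ p i
  have Pl : ∀ l, HasDerivAt (fun r => P σ (lineP p i r) l) (Yv P σ p i l) 0 :=
    fun l => hasDerivAt_pi.1 (hasDerivAt_lineF hP σ p i) l
  have Fol : ∀ l, HasDerivAt (fun r => Fofun m c E B X P l (σ, lineP p i r))
      (fderiv ℝ (fun q => Fofun m c E B X P l (σ, q)) p (Pi.single i 1)) 0 :=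
    fun l => hasDerivAt_along_line ((contDiff_Fo hm hc hE hB hX hP l).differentiable one_ne_zero) σ p i
  have dotline : HasDerivAt
      (fun r => dot3 (P σ (lineP p i r)) (fun k => Fofun m c E B X P k (σ, lineP p i r)))
      (dot3 (Yv P σ p i) (fun k => Fofun m c E B X P k (σ, lineP p i 0))
        + dot3 (P σ (lineP p i 0)) (fun k => fderiv ℝ (fun q => Fofun m c E B X P k (σ, q)) p
            (Pi.single i 1))) 0 := by
    have h := (((Pl 0).mul (Fol 0)).add ((Pl 1).mul (Fol 1))).add ((Pl 2).mul (Fol 2))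
    have e : (fun r => dot3 (P σ (lineP p i r)) (fun k => Fofun m c E B X P k (σ, lineP p i r)))
        = fun r => P σ (lineP p i r) 0 * Fofun m c E B X P 0 (σ, lineP p i r)
            + P σ (lineP p i r) 1 * Fofun m c E B X P 1 (σ, lineP p i r)
            + P σ (lineP p i r) 2 * Fofun m c E B X P 2 (σ, lineP p i r) := by
      funext r; rw [dot3_expand]
    rw [e]
    refine h.congr_deriv ?_
    rw [dot3_expand, dot3_expand]
    ring
  have spow := sline.pow 3
  have h2 := ((((Fol j).mul sline).sub
    (((Pl j).mul dotline).mul spow)).const_mul c)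
  have e : (fun r => hfun m c E B X P j (σ, lineP p i r))
      = fun r => c * (Fofun m c E B X P j (σ, lineP p i r) * sfn m c (P σ (lineP p i r))
          - P σ (lineP p i r) j
              * dot3 (P σ (lineP p i r)) (fun k => Fofun m c E B X P k (σ, lineP p i r))
              * (sfn m c (P σ (lineP p i r)))^3) := rfl
  rw [e] at h1
  have := h1.unique h2
  rw [this, lineP_zero]
  simp only [Pi.mul_apply, Pi.pow_apply, lineP_zero]
  ring

end main3

section bounds

lemma abs_sub_le' (x y : ℝ) : |x - y| ≤ |x| + |y| := by
  rw [sub_eq_add_neg]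
  exact (abs_add_le _ _).trans (by rw [abs_neg])

variable {m c K : ℝ} {E B X P : ℝ → (Fin 3 → ℝ) → Fin 3 → ℝ}

lemma sfn_nonneg (v : Fin 3 → ℝ) : 0 ≤ sfn m c v := by
  unfold sfn; positivity

lemma sfn_le' (hm : 0 < m) (hc : 0 < c) (v : Fin 3 → ℝ) : sfn m c v ≤ (m*c)⁻¹ :=
  sfun_le hm hc v

lemma sfn_mul_abs_le (hm : 0 < m) (hc : 0 < c) (v : Fin 3 → ℝ) (l : Fin 3) :
    sfn m c v * |v l| ≤ 1 := by
  calc sfn m c v * |v l| ≤ sfn m c v * Real.sqrt (m^2*c^2 + dot3 v v) := by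
        exact mul_le_mul_of_nonneg_left (abs_le_sqrtw hm hc v l) (sfn_nonneg v)
    _ = 1 := sfun_mul_sqrt hm hc v

lemma dot3_sqrtw_le (hm : 0 < m) (hc : 0 < c) (v Z : Fin 3 → ℝ) :
    |dot3 v Z| ≤ 3 * (Real.sqrt (m^2*c^2 + dot3 v v) * ‖Z‖) :=
  dot3_abs_le v Z (abs_le_sqrtw hm hc v) (fun k => abs_le_norm3 Z k)

lemma sfn3_dot_le (hm : 0 < m) (hc : 0 < c) (v Z : Fin 3 → ℝ) :
    (sfn m c v)^3 * |dot3 v Z| ≤ 3 * (sfn m c v)^2 * ‖Z‖ := by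
  have h0 := sfn_nonneg (m := m) (c := c) v
  calc (sfn m c v)^3 * |dot3 v Z|
      ≤ (sfn m c v)^3 * (3 * (Real.sqrt (m^2*c^2 + dot3 v v) * ‖Z‖)) := by
        exact mul_le_mul_of_nonneg_left (dot3_sqrtw_le hm hc v Z) (by positivity)
    _ = 3 * (sfn m c v)^2 * ‖Z‖ * (sfn m c v * Real.sqrt (m^2*c^2 + dot3 v v)) := by ring
    _ = 3 * (sfn m c v)^2 * ‖Z‖ := by rw [show sfn m c v * Real.sqrt (m^2*c^2 + dot3 v v)
          = 1 from sfun_mul_sqrt hm hc v]; ring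

lemma sfn3_dot_mul_le (hm : 0 < m) (hc : 0 < c) (v Z : Fin 3 → ℝ) (l : Fin 3) :
    (sfn m c v)^3 * |dot3 v Z| * |v l| ≤ 3 * sfn m c v * ‖Z‖ := by
  have h0 := sfn_nonneg (m := m) (c := c) v
  calc (sfn m c v)^3 * |dot3 v Z| * |v l| ≤ 3 * (sfn m c v)^2 * ‖Z‖ * |v l| := by
        exact mul_le_mul_of_nonneg_right (sfn3_dot_le hm hc v Z) (abs_nonneg _)
    _ = 3 * sfn m c v * ‖Z‖ * (sfn m c v * |v l|) := by ring
    _ ≤ 3 * sfn m c v * ‖Z‖ * 1 := by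
        exact mul_le_mul_of_nonneg_left (sfn_mul_abs_le hm hc v l) (by positivity)
    _ = 3 * sfn m c v * ‖Z‖ := by ring

lemma Fo_bound (hm : 0 < m) (hc : 0 < c) (hK : 0 ≤ K)
    (hEb : ∀ s y l, |E s y l| ≤ K) (hBb : ∀ s y l, |B s y l| ≤ K)
    (σ : ℝ) (q : Fin 3 → ℝ) (k : Fin 3) : |Fofun m c E B X P k (σ, q)| ≤ 3 * K := by
  unfold Fofun
  have h1 : ∀ l l' : Fin 3, |sfn m c (P σ q) * P σ q l * B σ (X σ q) l'| ≤ K := by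
    intro l l'
    rw [abs_mul, abs_mul, abs_of_nonneg (sfn_nonneg _)]
    calc sfn m c (P σ q) * |P σ q l| * |B σ (X σ q) l'| ≤ 1 * K :=
          mul_le_mul (sfn_mul_abs_le hm hc _ l) (hBb _ _ _) (abs_nonneg _) zero_le_one
      _ = K := one_mul K
  calc |(-(E σ (X σ q) k)) - (sfn m c (P σ q) * P σ q (k+1) * B σ (X σ q) (k+2)
        - sfn m c (P σ q) * P σ q (k+2) * B σ (X σ q) (k+1))|
      ≤ |(-(E σ (X σ q) k))| + |sfn m c (P σ q) * P σ q (k+1) * B σ (X σ q) (k+2)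
          - sfn m c (P σ q) * P σ q (k+2) * B σ (X σ q) (k+1)| := abs_sub_le' _ _
    _ ≤ K + (K + K) := by
        rw [abs_neg]
        gcongr
        · exact hEb _ _ _
        · exact (abs_sub_le' _ _).trans (by gcongr; exacts [h1 _ _, h1 _ _])
    _ = 3 * K := by ring

lemma aEv_bound (hK : 0 ≤ K)
    (hE' : ∀ s y l j', |fderiv ℝ (fun y' => E s y' l) y (Pi.single j' 1)| ≤ K)
    (σ : ℝ) (p : Fin 3 → ℝ) (i k : Fin 3) :
    |aEv E X σ p i k| ≤ 3 * K * ‖Yv X σ p i‖ :=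
  clm_bound _ (fun l => hE' σ (X σ p) k l) _

end bounds

section bounds2
variable {m c K : ℝ} {E B X P : ℝ → (Fin 3 → ℝ) → Fin 3 → ℝ}

lemma G_deriv_bound (hm : 0 < m) (hc : 0 < c)
    (hP : ContDiff ℝ 2 (fun z : ℝ × (Fin 3 → ℝ) => P z.1 z.2))
    (σ : ℝ) (p : Fin 3 → ℝ) (i j : Fin 3) :
    |fderiv ℝ (fun q => Gfun m c P j (σ, q)) p (Pi.single i 1)|
      ≤ 4 * c * sfn m c (P σ p) * ‖Yv P σ p i‖ := by
  rw [fderiv_G_val hm hc hP σ p i j, abs_mul, abs_of_nonneg hc.le]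
  have h1 : |Yv P σ p i j * sfn m c (P σ p)
      - P σ p j * (sfn m c (P σ p))^3 * dot3 (P σ p) (Yv P σ p i)|
      ≤ ‖Yv P σ p i‖ * sfn m c (P σ p) + 3 * sfn m c (P σ p) * ‖Yv P σ p i‖ := by
    refine (abs_sub_le' _ _).trans ?_
    gcongr
    · rw [abs_mul, abs_of_nonneg (sfn_nonneg _)]
      exact mul_le_mul_of_nonneg_right (abs_le_norm3 _ _) (sfn_nonneg _)
    · rw [abs_mul, abs_mul]
      calc |P σ p j| * |(sfn m c (P σ p))^3| * |dot3 (P σ p) (Yv P σ p i)|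
          = (sfn m c (P σ p))^3 * |dot3 (P σ p) (Yv P σ p i)| * |P σ p j| := by
            rw [abs_of_nonneg (pow_nonneg (sfn_nonneg _) 3)]; ring
        _ ≤ 3 * sfn m c (P σ p) * ‖Yv P σ p i‖ := sfn3_dot_mul_le hm hc _ _ j
  calc c * |Yv P σ p i j * sfn m c (P σ p)
        - P σ p j * (sfn m c (P σ p))^3 * dot3 (P σ p) (Yv P σ p i)|
      ≤ c * (‖Yv P σ p i‖ * sfn m c (P σ p) + 3 * sfn m c (P σ p) * ‖Yv P σ p i‖) :=
        mul_le_mul_of_nonneg_left h1 hc.le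
    _ = 4 * c * sfn m c (P σ p) * ‖Yv P σ p i‖ := by ring

lemma Fo_deriv_bound (hm : 0 < m) (hc : 0 < c) (hK : 0 ≤ K)
    (hE : ContDiff ℝ 1 (fun z : ℝ × (Fin 3 → ℝ) => E z.1 z.2))
    (hB : ContDiff ℝ 1 (fun z : ℝ × (Fin 3 → ℝ) => B z.1 z.2))
    (hX : ContDiff ℝ 2 (fun z : ℝ × (Fin 3 → ℝ) => X z.1 z.2))
    (hP : ContDiff ℝ 2 (fun z : ℝ × (Fin 3 → ℝ) => P z.1 z.2))
    (hBb : ∀ s y l, |B s y l| ≤ K)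
    (hE' : ∀ s y l j', |fderiv ℝ (fun y' => E s y' l) y (Pi.single j' 1)| ≤ K)
    (hB' : ∀ s y l j', |fderiv ℝ (fun y' => B s y' l) y (Pi.single j' 1)| ≤ K)
    (σ : ℝ) (p : Fin 3 → ℝ) (i k : Fin 3) :
    |fderiv ℝ (fun q => Fofun m c E B X P k (σ, q)) p (Pi.single i 1)|
      ≤ 9 * K * ‖Yv X σ p i‖ + 8 * K * sfn m c (P σ p) * ‖Yv P σ p i‖ := by
  rw [fderiv_Fo_val hm hc hE hB hX hP σ p i k]
  set s := sfn m c (P σ p) with hs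
  set Y := Yv X σ p i with hY
  set Z := Yv P σ p i with hZ
  have hs0 : 0 ≤ s := sfn_nonneg _
  have hT : ∀ l l' : Fin 3,
      |((-(s^3 * dot3 (P σ p) Z)) * P σ p l + s * Z l) * B σ (X σ p) l'|
        ≤ 4 * K * (s * ‖Z‖) := by
    intro l l'
    rw [abs_mul]
    have h2 : |(-(s^3 * dot3 (P σ p) Z)) * P σ p l + s * Z l| ≤ 4 * (s * ‖Z‖) := by
      refine (abs_add_le _ _).trans ?_
      have e1 : |(-(s^3 * dot3 (P σ p) Z)) * P σ p l| ≤ 3 * s * ‖Z‖ := by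
        rw [abs_mul, abs_neg, abs_mul, abs_of_nonneg (pow_nonneg hs0 3)]
        exact sfn3_dot_mul_le hm hc _ _ l
      have e2 : |s * Z l| ≤ s * ‖Z‖ := by
        rw [abs_mul, abs_of_nonneg hs0]
        exact mul_le_mul_of_nonneg_left (abs_le_norm3 _ _) hs0
      linarith
    calc |(-(s^3 * dot3 (P σ p) Z)) * P σ p l + s * Z l| * |B σ (X σ p) l'|
        ≤ (4 * (s * ‖Z‖)) * K :=
          mul_le_mul h2 (hBb _ _ _) (abs_nonneg _) (mul_nonneg (by norm_num) (mul_nonneg hs0 (norm_nonneg _)))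
      _ = 4 * K * (s * ‖Z‖) := by ring
  have hU : ∀ l l' : Fin 3, |s * P σ p l * aEv B X σ p i l'| ≤ 3 * K * ‖Y‖ := by
    intro l l'
    rw [abs_mul, abs_mul, abs_of_nonneg hs0]
    calc s * |P σ p l| * |aEv B X σ p i l'| ≤ 1 * (3 * K * ‖Y‖) :=
          mul_le_mul (sfn_mul_abs_le hm hc _ l) (aEv_bound hK hB' σ p i l') (abs_nonneg _)
            zero_le_one
      _ = 3 * K * ‖Y‖ := one_mul _
  have haE : |aEv E X σ p i k| ≤ 3 * K * ‖Y‖ := aEv_bound hK hE' σ p i k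
  calc |(-(aEv E X σ p i k))
        - (((-(s^3 * dot3 (P σ p) Z)) * P σ p (k+1) + s * Z (k+1)) * B σ (X σ p) (k+2)
            + s * P σ p (k+1) * aEv B X σ p i (k+2)
          - (((-(s^3 * dot3 (P σ p) Z)) * P σ p (k+2) + s * Z (k+2)) * B σ (X σ p) (k+1)
            + s * P σ p (k+2) * aEv B X σ p i (k+1)))|
      ≤ |(-(aEv E X σ p i k))|
        + (|((-(s^3 * dot3 (P σ p) Z)) * P σ p (k+1) + s * Z (k+1)) * B σ (X σ p) (k+2)
            + s * P σ p (k+1) * aEv B X σ p i (k+2)|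
          + |((-(s^3 * dot3 (P σ p) Z)) * P σ p (k+2) + s * Z (k+2)) * B σ (X σ p) (k+1)
            + s * P σ p (k+2) * aEv B X σ p i (k+1)|) := by
        refine (abs_sub_le' _ _).trans ?_
        gcongr
        exact abs_sub_le' _ _
    _ ≤ 3 * K * ‖Y‖ + ((4 * K * (s * ‖Z‖) + 3 * K * ‖Y‖) + (4 * K * (s * ‖Z‖) + 3 * K * ‖Y‖)) := by
        rw [abs_neg]
        exact add_le_add haE (add_le_add
          ((abs_add_le _ _).trans (add_le_add (hT _ _) (hU _ _)))
          ((abs_add_le _ _).trans (add_le_add (hT _ _) (hU _ _))))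
    _ = 9 * K * ‖Y‖ + 8 * K * s * ‖Z‖ := by ring

end bounds2

section arith

lemma abs_mul2_le {a b A B2 : ℝ} (ha : |a| ≤ A) (hb : |b| ≤ B2) : |a*b| ≤ A*B2 := by
  rw [abs_mul]
  exact mul_le_mul ha hb (abs_nonneg _) ((abs_nonneg a).trans ha)

lemma abs_mul3_le {a b d A B2 D : ℝ} (ha : |a| ≤ A) (hb : |b| ≤ B2) (hd : |d| ≤ D) :
    |a*b*d| ≤ A*B2*D :=
  abs_mul2_le (abs_mul2_le ha hb) hd

lemma habs_arith {cc K s sw Pj Zj Fj F'j d dZF dPF' sp Ynorm Znorm : ℝ}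
    (hcc : 0 ≤ cc) (hK : 0 ≤ K) (hs0 : 0 ≤ s) (hsw0 : 0 ≤ sw)
    (hYn : 0 ≤ Ynorm) (hZn : 0 ≤ Znorm)
    (hsw : s * sw = 1)
    (hF'j : |F'j| ≤ 9*K*Ynorm + 8*K*s*Znorm)
    (hFj : |Fj| ≤ 3*K) (hPj : |Pj| ≤ sw) (hZj : |Zj| ≤ Znorm)
    (hd : |d| ≤ 9*K*sw) (hdZF : |dZF| ≤ 9*K*Znorm)
    (hdPF' : |dPF'| ≤ 3*(sw*(9*K*Ynorm + 8*K*s*Znorm)))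
    (hsp : |sp| ≤ 3*s^2*Znorm) :
    |cc*(F'j*s + Fj*sp - (Zj*d*s^3 + Pj*(dZF+dPF')*s^3 + Pj*d*(3*s^2*sp)))|
      ≤ cc*K*(36*s*Ynorm + 140*s^2*Znorm) := by
  have hs3 : |s^3| ≤ s^3 := le_of_eq (abs_of_nonneg (by positivity))
  have hss : |s| ≤ s := le_of_eq (abs_of_nonneg hs0)
  have hA1 : |F'j*s| ≤ (9*K*Ynorm + 8*K*s*Znorm)*s := abs_mul2_le hF'j hss
  have hA2 : |Fj*sp| ≤ 3*K*(3*s^2*Znorm) := abs_mul2_le hFj hsp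
  have hT3 : |Zj*d*s^3| ≤ Znorm*(9*K*sw)*s^3 := abs_mul3_le hZj hd hs3
  have hT4 : |Pj*(dZF+dPF')*s^3|
      ≤ sw*(9*K*Znorm + 3*(sw*(9*K*Ynorm + 8*K*s*Znorm)))*s^3 :=
    abs_mul3_le hPj ((abs_add_le _ _).trans (add_le_add hdZF hdPF')) hs3
  have hT5 : |Pj*d*(3*s^2*sp)| ≤ sw*(9*K*sw)*(3*s^2*(3*s^2*Znorm)) := by
    refine abs_mul3_le hPj hd ?_
    rw [abs_mul, abs_of_nonneg (by positivity : (0:ℝ) ≤ 3*s^2)]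
    exact mul_le_mul_of_nonneg_left hsp (by positivity)
  have habs : |F'j*s + Fj*sp - (Zj*d*s^3 + Pj*(dZF+dPF')*s^3 + Pj*d*(3*s^2*sp))|
      ≤ |F'j*s| + |Fj*sp| + (|Zj*d*s^3| + |Pj*(dZF+dPF')*s^3| + |Pj*d*(3*s^2*sp)|) :=
    (abs_sub_le' _ _).trans (add_le_add (abs_add_le _ _)
      ((abs_add_le _ _).trans (add_le_add (abs_add_le _ _) le_rfl)))
  have hsum : |F'j*s + Fj*sp - (Zj*d*s^3 + Pj*(dZF+dPF')*s^3 + Pj*d*(3*s^2*sp))|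
      ≤ K*(36*s*Ynorm + 140*s^2*Znorm) := by
    have e : (9*K*Ynorm + 8*K*s*Znorm)*s + 3*K*(3*s^2*Znorm)
        + (Znorm*(9*K*sw)*s^3 + sw*(9*K*Znorm + 3*(sw*(9*K*Ynorm + 8*K*s*Znorm)))*s^3
          + sw*(9*K*sw)*(3*s^2*(3*s^2*Znorm)))
        = K*(9*s*Ynorm + 17*s^2*Znorm) + 9*K*Znorm*s^2*(s*sw)*2
          + (27*K*Ynorm*s + 105*K*Znorm*s^2)*(s*sw)^2 := by ring
    have e2 : (9*K*Ynorm + 8*K*s*Znorm)*s + 3*K*(3*s^2*Znorm)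
        + (Znorm*(9*K*sw)*s^3 + sw*(9*K*Znorm + 3*(sw*(9*K*Ynorm + 8*K*s*Znorm)))*s^3
          + sw*(9*K*sw)*(3*s^2*(3*s^2*Znorm)))
        = K*(36*s*Ynorm + 140*s^2*Znorm) := by
      rw [e, hsw]; ring
    calc |F'j*s + Fj*sp - (Zj*d*s^3 + Pj*(dZF+dPF')*s^3 + Pj*d*(3*s^2*sp))|
        ≤ (9*K*Ynorm + 8*K*s*Znorm)*s + 3*K*(3*s^2*Znorm)
          + (Znorm*(9*K*sw)*s^3 + sw*(9*K*Znorm + 3*(sw*(9*K*Ynorm + 8*K*s*Znorm)))*s^3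
            + sw*(9*K*sw)*(3*s^2*(3*s^2*Znorm))) :=
          habs.trans (add_le_add (add_le_add hA1 hA2)
            (add_le_add (add_le_add hT3 hT4) hT5))
      _ = K*(36*s*Ynorm + 140*s^2*Znorm) := e2
  calc |cc*(F'j*s + Fj*sp - (Zj*d*s^3 + Pj*(dZF+dPF')*s^3 + Pj*d*(3*s^2*sp)))|
      = cc * |F'j*s + Fj*sp - (Zj*d*s^3 + Pj*(dZF+dPF')*s^3 + Pj*d*(3*s^2*sp))| := by
        rw [abs_mul, abs_of_nonneg hcc]
    _ ≤ cc * (K*(36*s*Ynorm + 140*s^2*Znorm)) := mul_le_mul_of_nonneg_left hsum hcc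
    _ = cc*K*(36*s*Ynorm + 140*s^2*Znorm) := by ring

end arith

section hbound
variable {m c K : ℝ} {E B X P : ℝ → (Fin 3 → ℝ) → Fin 3 → ℝ}

lemma h_deriv_bound (hm : 0 < m) (hc : 0 < c) (hK : 0 ≤ K)
    (hE : ContDiff ℝ 1 (fun z : ℝ × (Fin 3 → ℝ) => E z.1 z.2))
    (hB : ContDiff ℝ 1 (fun z : ℝ × (Fin 3 → ℝ) => B z.1 z.2))
    (hX : ContDiff ℝ 2 (fun z : ℝ × (Fin 3 → ℝ) => X z.1 z.2))
    (hP : ContDiff ℝ 2 (fun z : ℝ × (Fin 3 → ℝ) => P z.1 z.2))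
    (hEb : ∀ s y l, |E s y l| ≤ K) (hBb : ∀ s y l, |B s y l| ≤ K)
    (hE' : ∀ s y l j', |fderiv ℝ (fun y' => E s y' l) y (Pi.single j' 1)| ≤ K)
    (hB' : ∀ s y l j', |fderiv ℝ (fun y' => B s y' l) y (Pi.single j' 1)| ≤ K)
    (σ : ℝ) (p : Fin 3 → ℝ) (i j : Fin 3) :
    |fderiv ℝ (fun q => hfun m c E B X P j (σ, q)) p (Pi.single i 1)|
      ≤ c*K*(36 * sfn m c (P σ p) * ‖Yv X σ p i‖
          + 140 * (sfn m c (P σ p))^2 * ‖Yv P σ p i‖) := by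
  rw [fderiv_h_val hm hc hE hB hX hP σ p i j]
  have hsw : sfn m c (P σ p) * Real.sqrt (m^2*c^2 + dot3 (P σ p) (P σ p)) = 1 :=
    sfun_mul_sqrt hm hc (P σ p)
  have hF' : ∀ l, |fderiv ℝ (fun q => Fofun m c E B X P l (σ, q)) p (Pi.single i 1)|
      ≤ 9*K*‖Yv X σ p i‖ + 8*K*(sfn m c (P σ p))*‖Yv P σ p i‖ :=
    fun l => Fo_deriv_bound hm hc hK hE hB hX hP hBb hE' hB' σ p i l
  have hFb : ∀ l, |Fofun m c E B X P l (σ, p)| ≤ 3*K := fun l => Fo_bound hm hc hK hEb hBb σ p l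
  refine habs_arith hc.le hK (sfn_nonneg _) (Real.sqrt_nonneg _) (norm_nonneg _)
    (norm_nonneg _) hsw (by
      have h := hF' j
      calc |fderiv ℝ (fun q => Fofun m c E B X P j (σ, q)) p (Pi.single i 1)|
          ≤ 9*K*‖Yv X σ p i‖ + 8*K*(sfn m c (P σ p))*‖Yv P σ p i‖ := h
        _ = 9*K*‖Yv X σ p i‖ + 8*K*(sfn m c (P σ p))*‖Yv P σ p i‖ := rfl)
    (hFb j) (abs_le_sqrtw hm hc _ j) (abs_le_norm3 _ j) ?_ ?_ ?_ ?_
  · have h := dot3_abs_le (P σ p) (fun k => Fofun m c E B X P k (σ, p))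
      (abs_le_sqrtw hm hc (P σ p)) hFb
    linarith
  · have h := dot3_abs_le (Yv P σ p i) (fun k => Fofun m c E B X P k (σ, p))
      (fun k => abs_le_norm3 _ k) hFb
    linarith
  · exact dot3_abs_le (P σ p) _ (abs_le_sqrtw hm hc (P σ p)) (fun k => hF' k)
  · rw [abs_neg, abs_mul, abs_of_nonneg (pow_nonneg (sfn_nonneg _) 3)]
    exact sfn3_dot_le hm hc _ _

end hbound

section gron
open Real
variable {F : Type*} [NormedAddCommGroup F] [NormedSpace ℝ F]

lemma gronwall_two_sided {V V' : ℝ → F} {L δ : ℝ} (hL : 0 ≤ L) (hδ0 : 0 ≤ δ)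
    (hV : ∀ σ, HasDerivAt V (V' σ) σ) (hb : ∀ σ, ‖V' σ‖ ≤ L * ‖V σ‖)
    {t τ Tb : ℝ} (hTb : 0 ≤ Tb) (h : |τ - t| ≤ Tb) (hδ : ‖V t‖ ≤ δ) :
    ‖V τ‖ ≤ δ * Real.exp (L * Tb) := by
  have fwd : ∀ (W W' : ℝ → F), (∀ σ, HasDerivAt W (W' σ) σ) →
      (∀ σ, ‖W' σ‖ ≤ L * ‖W σ‖) → ‖W t‖ ≤ δ →
      ∀ u, t ≤ u → u ≤ t + Tb → ‖W u‖ ≤ δ * Real.exp (L * Tb) := by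
    intro W W' hW hWb hWt u hu1 hu2
    have hcont : ContinuousOn W (Set.Icc t (t + Tb)) :=
      fun σ _ => ((hW σ).continuousAt).continuousWithinAt
    have key := norm_le_gronwallBound_of_norm_deriv_right_le (f := W) (f' := W')
      (δ := δ) (K := L) (ε := 0) (a := t) (b := t + Tb) hcont
      (fun σ _ => (hW σ).hasDerivWithinAt) hWt
      (fun σ _ => by simpa using hWb σ)
    have h2 := key u ⟨hu1, hu2⟩
    rw [gronwallBound_ε0] at h2
    refine h2.trans ?_
    have : Real.exp (L * (u - t)) ≤ Real.exp (L * Tb) :=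
      Real.exp_le_exp.2 (by nlinarith)
    exact mul_le_mul_of_nonneg_left this hδ0
  rcases le_or_gt t τ with hcase | hcase
  · exact fwd V V' hV hb hδ τ hcase (by have := abs_le.1 h; linarith)
  · have hW : ∀ σ, HasDerivAt (fun s => V (2*t - s)) (-(V' (2*t - σ))) σ := by
      intro σ
      have hin : HasDerivAt (fun s : ℝ => 2*t - s) (-1) σ := by
        exact ((hasDerivAt_const σ (2*t)).sub (hasDerivAt_id σ)).congr_deriv (by norm_num)
      have := (hV (2*t - σ)).scomp σ hin
      simpa [Function.comp_def] using this
    have hWb : ∀ σ, ‖-(V' (2*t - σ))‖ ≤ L * ‖V (2*t - σ)‖ := by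
      intro σ; rw [norm_neg]; exact hb _
    have hWt : ‖V (2*t - t)‖ ≤ δ := by
      rw [show 2*t - t = t by ring]; exact hδ
    have := fwd (fun s => V (2*t - s)) (fun σ => -(V' (2*t - σ))) hW hWb hWt
      (2*t - τ) (by linarith) (by have := abs_le.1 h; linarith)
    simpa [show 2*t - (2*t - τ) = τ by ring] using this
  
end gron

section window
variable {F : Type*} [NormedAddCommGroup F] [NormedSpace ℝ F]

lemma curve_diff_bound {f f' : ℝ → F} {C t τ Tb : ℝ}
    (hf : ∀ σ, HasDerivAt f (f' σ) σ)
    (hb : ∀ σ, |σ - t| ≤ Tb → ‖f' σ‖ ≤ C)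
    (hτ : |τ - t| ≤ Tb) (hTb : 0 ≤ Tb) : ‖f τ - f t‖ ≤ C * Tb := by
  have habs : ∀ σ, σ ∈ Set.Icc (t - Tb) (t + Tb) → |σ - t| ≤ Tb := by
    intro σ hσ
    rw [abs_le]; constructor <;> [linarith [hσ.1]; linarith [hσ.2]]
  have hC0 : 0 ≤ C := (norm_nonneg _).trans (hb t (by simpa using hTb))
  have h := Convex.norm_image_sub_le_of_norm_hasDerivWithin_le
    (f := f) (f' := f') (s := Set.Icc (t - Tb) (t + Tb))
    (fun σ hσ => (hf σ).hasDerivWithinAt)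
    (fun σ hσ => hb σ (habs σ hσ)) (convex_Icc _ _)
    (x := t) (y := τ)
    (by constructor <;> linarith)
    (by have := abs_le.1 hτ; constructor <;> linarith)
  refine h.trans ?_
  have : ‖τ - t‖ ≤ Tb := by rwa [Real.norm_eq_abs]
  exact mul_le_mul_of_nonneg_left this hC0

lemma sfn_window {m c : ℝ} (hm : 0 < m) (hc : 0 < c) {v p : Fin 3 → ℝ}
    (h : ∀ k, |v k - p k| ≤ m*c/8) :
    sfn m c v ≤ 2 * (Real.sqrt (m^2*c^2 + dot3 p p))⁻¹ := by
  have hk2 : ∀ k, (p k - v k)^2 ≤ (m*c/8)^2 := by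
    intro k
    have := abs_le.1 (h k)
    nlinarith [this.1, this.2]
  have hineq : m^2*c^2 + dot3 p p ≤ 4*(m^2*c^2 + dot3 v v) := by
    have e1 := dot3_expand p p
    have e2 := dot3_expand v v
    nlinarith [hk2 0, hk2 1, hk2 2,
      mul_pos (mul_pos hm hm) (mul_pos hc hc), sq_nonneg (p 0 - 2*v 0), sq_nonneg (p 1 - 2*v 1),
      sq_nonneg (p 2 - 2*v 2)]
  have hsq : Real.sqrt (m^2*c^2 + dot3 p p) ≤ 2 * Real.sqrt (m^2*c^2 + dot3 v v) := by
    have := Real.sqrt_le_sqrt hineq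
    rwa [show (4:ℝ)*(m^2*c^2 + dot3 v v) = 2^2*(m^2*c^2 + dot3 v v) by ring,
      Real.sqrt_mul (by norm_num : (0:ℝ) ≤ 2^2),
      Real.sqrt_sq (by norm_num : (0:ℝ) ≤ 2)] at this
  have hp0 : 0 < Real.sqrt (m^2*c^2 + dot3 p p) := sqrtw_pos hm hc p
  have hv0 : 0 < Real.sqrt (m^2*c^2 + dot3 v v) := sqrtw_pos hm hc v
  unfold sfn
  rw [inv_le_iff_one_le_mul₀ hv0]
  have h1 : 0 < (Real.sqrt (m^2*c^2 + dot3 p p))⁻¹ := inv_pos.2 hp0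
  nlinarith [mul_le_mul_of_nonneg_left hsq h1.le,
    inv_mul_cancel₀ (ne_of_gt hp0)]

end window


/-- There exist `T̄, C > 0` depending only on `m, c, K` such that, for any `C¹`
electromagnetic fields bounded (together with their spatial gradients) by `K`,
and any jointly smooth solution `(X, P)` (C² in `(τ,p)`, with `d²/dτ² ∂_p X`
continuous) of the relativistic characteristic system with data
`X(t;t,x,p) = x`, `P(t;t,x,p) = p`, one has
`|d²/dτ² ∂_{p_i} X_j(τ;t,x,p)| ≤ C c / (p⁰)²` for `|τ − t| ≤ T̄`. -/
theorem stmt18 (m c K : ℝ) (hm : 0 < m) (hc : 0 < c) (hK : 0 < K) :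
    ∃ Tbar C : ℝ, 0 < Tbar ∧ 0 < C ∧
      ∀ (E B : ℝ → (Fin 3 → ℝ) → Fin 3 → ℝ),
        ContDiff ℝ 1 (fun z : ℝ × (Fin 3 → ℝ) => E z.1 z.2) →
        ContDiff ℝ 1 (fun z : ℝ × (Fin 3 → ℝ) => B z.1 z.2) →
        (∀ s y i, |E s y i| ≤ K) →
        (∀ s y i, |B s y i| ≤ K) →
        (∀ s y i j, |fderiv ℝ (fun y' => E s y' i) y (Pi.single j 1)| ≤ K) →
        (∀ s y i j, |fderiv ℝ (fun y' => B s y' i) y (Pi.single j 1)| ≤ K) →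
        ∀ (t : ℝ), 0 ≤ t → ∀ (x : Fin 3 → ℝ),
        ∀ (X P : ℝ → (Fin 3 → ℝ) → Fin 3 → ℝ),
          ContDiff ℝ 2 (fun z : ℝ × (Fin 3 → ℝ) => X z.1 z.2) →
          ContDiff ℝ 2 (fun z : ℝ × (Fin 3 → ℝ) => P z.1 z.2) →
          (∀ p i j, ContDiff ℝ 2
            (fun σ => fderiv ℝ (fun q => X σ q j) p (Pi.single i 1))) →
          (∀ p, X t p = x) → (∀ p, P t p = p) →
          (∀ τ p, HasDerivAt (fun σ => X σ p)
              ((c / Real.sqrt (m ^ 2 * c ^ 2 + dot3 (P τ p) (P τ p))) • P τ p) τ) →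
          (∀ τ p, HasDerivAt (fun σ => P σ p)
              (-(E τ (X τ p)) -
                crossProduct
                  ((Real.sqrt (m ^ 2 * c ^ 2 + dot3 (P τ p) (P τ p)))⁻¹ • P τ p)
                  (B τ (X τ p))) τ) →
          ∀ τ, |τ - t| ≤ Tbar → ∀ (p : Fin 3 → ℝ) (i j : Fin 3),
            |deriv (deriv (fun σ => fderiv ℝ (fun q => X σ q j) p (Pi.single i 1))) τ|
              ≤ C * c / (Real.sqrt (m ^ 2 * c ^ 2 + dot3 p p)) ^ 2 := by
  refine ⟨m*c/(24*K),
    1200*K*(Real.exp ((4/m + 9*K + 8*K/(m*c)) * (m*c/(24*K))))*(c*(m*c/(24*K)) + 1),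
    by positivity, by positivity, ?_⟩
  intro E B hE hB hEb hBb hE' hB' t ht x X P hX hP hXp hXt hPt hXode hPode τ hτ p i j
  set Tb := m*c/(24*K) with hTbdef
  set L := 4/m + 9*K + 8*K/(m*c) with hLdef
  set M := Real.exp (L * Tb) with hMdef
  have hTb0 : 0 < Tb := by positivity
  have hL0 : 0 ≤ L := by positivity
  have hM0 : 0 < M := Real.exp_pos _
  have hmc : m ^ 2 * c ^ 2 = m^2*c^2 := rfl
  -- ODE hypotheses in normalized power form
  have hXode' : ∀ τ' q, HasDerivAt (fun σ => X σ q)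
      ((c / Real.sqrt (m^2*c^2 + dot3 (P τ' q) (P τ' q))) • P τ' q) τ' := hXode
  have hPode' : ∀ τ' q, HasDerivAt (fun σ => P σ q)
      (-(E τ' (X τ' q)) - crossProduct
        ((Real.sqrt (m^2*c^2 + dot3 (P τ' q) (P τ' q)))⁻¹ • P τ' q) (B τ' (X τ' q))) τ' := hPode
  -- first swap : derivative of Y components
  have hswap1 : ∀ (j' : Fin 3) (σ : ℝ), HasDerivAt
      (fun s => fderiv ℝ (fun q => X s q j') p (Pi.single i 1))
      (fderiv ℝ (fun q => Gfun m c P j' (σ, q)) p (Pi.single i 1)) σ := by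
    intro j' σ
    exact swapDeriv (fun u => X u.1 u.2 j') (Gfun m c P j')
      (contDiff_comp_proj j' hX) ((contDiff_G hm hc hP j').differentiable two_ne_zero)
      (fun s q => Xode_comp hXode' s q j') σ p _
  have hswapP : ∀ (k : Fin 3) (σ : ℝ), HasDerivAt
      (fun s => fderiv ℝ (fun q => P s q k) p (Pi.single i 1))
      (fderiv ℝ (fun q => Fofun m c E B X P k (σ, q)) p (Pi.single i 1)) σ := by
    intro k σ
    exact swapDeriv (fun u => P u.1 u.2 k) (Fofun m c E B X P k)
      (contDiff_comp_proj k hP) ((contDiff_Fo hm hc hE hB hX hP k).differentiable one_ne_zero)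
      (fun s q => Pode_comp hPode' s q k) σ p _
  have hswap2 : HasDerivAt
      (fun σ => fderiv ℝ (fun q => Gfun m c P j (σ, q)) p (Pi.single i 1))
      (fderiv ℝ (fun q => hfun m c E B X P j (τ, q)) p (Pi.single i 1)) τ :=
    swapDeriv (Gfun m c P j) (hfun m c E B X P j)
      (contDiff_G hm hc hP j) ((contDiff_h hm hc hE hB hX hP j).differentiable one_ne_zero)
      (fun s q => Gode hm hc hPode' s q j) τ p _
  have htarget : deriv (deriv (fun σ => fderiv ℝ (fun q => X σ q j) p (Pi.single i 1))) τ
      = fderiv ℝ (fun q => hfun m c E B X P j (τ, q)) p (Pi.single i 1) := by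
    have e : deriv (fun σ => fderiv ℝ (fun q => X σ q j) p (Pi.single i 1))
        = fun σ => fderiv ℝ (fun q => Gfun m c P j (σ, q)) p (Pi.single i 1) :=
      funext fun σ => (hswap1 j σ).deriv
    rw [e]
    exact hswap2.deriv
  -- Gronwall
  set V : ℝ → (Fin 3 → ℝ) × (Fin 3 → ℝ) := fun σ => (Yv X σ p i, Yv P σ p i) with hVdef
  set V' : ℝ → (Fin 3 → ℝ) × (Fin 3 → ℝ) := fun σ =>
    (fun j' => fderiv ℝ (fun q => Gfun m c P j' (σ, q)) p (Pi.single i 1),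
     fun k => fderiv ℝ (fun q => Fofun m c E B X P k (σ, q)) p (Pi.single i 1)) with hV'def
  have hYode : ∀ σ, HasDerivAt (fun σ => Yv X σ p i)
      (fun j' => fderiv ℝ (fun q => Gfun m c P j' (σ, q)) p (Pi.single i 1)) σ :=
    fun σ => hasDerivAt_pi.2 (fun j' => hswap1 j' σ)
  have hZode : ∀ σ, HasDerivAt (fun σ => Yv P σ p i)
      (fun k => fderiv ℝ (fun q => Fofun m c E B X P k (σ, q)) p (Pi.single i 1)) σ :=
    fun σ => hasDerivAt_pi.2 (fun k => hswapP k σ)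
  have hVode : ∀ σ, HasDerivAt V (V' σ) σ := fun σ => (hYode σ).prodMk (hZode σ)
  have hYfst : ∀ σ, ‖Yv X σ p i‖ ≤ ‖V σ‖ := fun σ => norm_fst_le (V σ)
  have hZsnd : ∀ σ, ‖Yv P σ p i‖ ≤ ‖V σ‖ := fun σ => norm_snd_le (V σ)
  have hYFb : ∀ σ, ‖(fun j' => fderiv ℝ (fun q => Gfun m c P j' (σ, q)) p (Pi.single i 1) :
      Fin 3 → ℝ)‖ ≤ 4*c*sfn m c (P σ p)*‖Yv P σ p i‖ := by
    intro σ
    refine norm3_le _ ?_ (fun j' => G_deriv_bound hm hc hP σ p i j')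
    have := sfn_nonneg (m := m) (c := c) (P σ p)
    positivity
  have hZFb : ∀ σ, ‖(fun k => fderiv ℝ (fun q => Fofun m c E B X P k (σ, q)) p (Pi.single i 1) :
      Fin 3 → ℝ)‖ ≤ 9*K*‖Yv X σ p i‖ + 8*K*sfn m c (P σ p)*‖Yv P σ p i‖ := by
    intro σ
    refine norm3_le _ ?_ (fun k => Fo_deriv_bound hm hc hK.le hE hB hX hP hBb hE' hB' σ p i k)
    have := sfn_nonneg (m := m) (c := c) (P σ p)
    positivity
  have hVbound : ∀ σ, ‖V' σ‖ ≤ L * ‖V σ‖ := by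
    intro σ
    have hs0 : 0 ≤ sfn m c (P σ p) := sfn_nonneg _
    have hsle : sfn m c (P σ p) ≤ (m*c)⁻¹ := sfn_le' hm hc _
    rw [hV'def, Prod.norm_def]
    apply max_le
    · refine (hYFb σ).trans ?_
      calc 4*c*sfn m c (P σ p)*‖Yv P σ p i‖ ≤ 4*c*(m*c)⁻¹*‖V σ‖ := by
            have h1 : 4*c*sfn m c (P σ p) ≤ 4*c*(m*c)⁻¹ := by
              have : (0:ℝ) ≤ 4*c := by linarith
              exact mul_le_mul_of_nonneg_left hsle this
            exact mul_le_mul h1 (hZsnd σ) (norm_nonneg _) (by positivity)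
        _ = (4/m)*‖V σ‖ := by rw [show 4*c*(m*c)⁻¹ = 4/m by field_simp]
        _ ≤ L*‖V σ‖ := by
            refine mul_le_mul_of_nonneg_right ?_ (norm_nonneg _)
            rw [hLdef]
            have h8 : 0 < 8*K/(m*c) := by positivity
            linarith
    · refine (hZFb σ).trans ?_
      have h1 : 9*K*‖Yv X σ p i‖ ≤ 9*K*‖V σ‖ :=
        mul_le_mul_of_nonneg_left (hYfst σ) (by positivity)
      have h2 : 8*K*sfn m c (P σ p)*‖Yv P σ p i‖ ≤ 8*K/(m*c)*‖V σ‖ := by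
        have h3 : 8*K*sfn m c (P σ p) ≤ 8*K/(m*c) := by
          rw [div_eq_mul_inv]
          exact mul_le_mul_of_nonneg_left hsle (by positivity)
        exact mul_le_mul h3 (hZsnd σ) (norm_nonneg _) (by positivity)
      have h4 : (4/m)*‖V σ‖ ≥ 0 := by positivity
      rw [hLdef]
      nlinarith [norm_nonneg (V σ)]
  -- initial value
  have hYt : Yv X t p i = 0 := by
    funext j'
    have e : (fun q => X t q j') = fun _ => x j' := funext fun q => by rw [hXt q]
    simp [Yv, e]
  have hZt : Yv P t p i = Pi.single i 1 := by
    funext k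
    have e : (fun q : Fin 3 → ℝ => P t q k) = fun q => q k := funext fun q => by rw [hPt q]
    have e2 : fderiv ℝ (fun q : Fin 3 → ℝ => q k) p
        = (ContinuousLinearMap.proj k : (Fin 3 → ℝ) →L[ℝ] ℝ) :=
      (ContinuousLinearMap.proj k : (Fin 3 → ℝ) →L[ℝ] ℝ).fderiv
    show fderiv ℝ (fun q => P t q k) p (Pi.single i 1) = (Pi.single i 1 : Fin 3 → ℝ) k
    rw [e, e2]
    rfl
  have hVt : ‖V t‖ ≤ 1 := by
    rw [hVdef]
    show ‖(Yv X t p i, Yv P t p i)‖ ≤ 1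
    rw [hYt, hZt]
    show max ‖(0 : Fin 3 → ℝ)‖ ‖(Pi.single i 1 : Fin 3 → ℝ)‖ ≤ 1
    apply max_le
    · simp
    · refine norm3_le _ zero_le_one (fun k => ?_)
      rw [Pi.single_apply]
      split <;> simp
  have hVnorm : ∀ σ, |σ - t| ≤ Tb → ‖V σ‖ ≤ M := by
    intro σ hσ
    have h := gronwall_two_sided hL0 zero_le_one hVode hVbound hTb0.le hσ hVt
    rwa [one_mul] at h
  -- window : momentum does not move much
  have hwin : ∀ σ, |σ - t| ≤ Tb →
      sfn m c (P σ p) ≤ 2 * (Real.sqrt (m^2*c^2 + dot3 p p))⁻¹ := by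
    intro σ hσ
    apply sfn_window hm hc
    intro k
    have hFb : ∀ σ', |σ' - t| ≤ Tb → ‖-(E σ' (X σ' p)) - crossProduct
        ((Real.sqrt (m^2*c^2 + dot3 (P σ' p) (P σ' p)))⁻¹ • P σ' p) (B σ' (X σ' p))‖
          ≤ 3*K := by
      intro σ' _
      refine norm3_le _ (by positivity) (fun k' => ?_)
      rw [show (Real.sqrt (m^2*c^2 + dot3 (P σ' p) (P σ' p)))⁻¹ • P σ' p
          = sfn m c (P σ' p) • P σ' p from rfl]
      rw [Fo_eq m c E B X P σ' p k']
      exact Fo_bound hm hc hK.le hEb hBb σ' p k'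
    have hcurve := curve_diff_bound (f := fun σ' => P σ' p)
      (f' := fun σ' => -(E σ' (X σ' p)) - crossProduct
        ((Real.sqrt (m^2*c^2 + dot3 (P σ' p) (P σ' p)))⁻¹ • P σ' p) (B σ' (X σ' p)))
      (fun σ' => hPode' σ' p) hFb hσ hTb0.le
    simp only [hPt] at hcurve
    have h3 : 3*K*Tb = m*c/8 := by rw [hTbdef]; field_simp; ring
    have hk : |P σ p k - p k| ≤ ‖P σ p - p‖ := by
      have := abs_le_norm3 (P σ p - p) k
      simpa using this
    calc |P σ p k - p k| ≤ ‖P σ p - p‖ := hk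
      _ ≤ 3*K*Tb := hcurve
      _ = m*c/8 := h3
  -- refined bound on Y
  set iq := (Real.sqrt (m^2*c^2 + dot3 p p))⁻¹ with hiqdef
  have hiq : 0 < iq := inv_pos.2 (sqrtw_pos hm hc p)
  have hYref : ‖Yv X τ p i‖ ≤ 8*c*iq*M*Tb := by
    have hYFb2 : ∀ σ, |σ - t| ≤ Tb →
        ‖(fun j' => fderiv ℝ (fun q => Gfun m c P j' (σ, q)) p (Pi.single i 1) :
          Fin 3 → ℝ)‖ ≤ 8*c*iq*M := by
      intro σ hσ
      refine (hYFb σ).trans ?_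
      have h1 : 4*c*sfn m c (P σ p) ≤ 4*c*(2*iq) :=
        mul_le_mul_of_nonneg_left (hwin σ hσ) (by positivity)
      have h2 : ‖Yv P σ p i‖ ≤ M := (hZsnd σ).trans (hVnorm σ hσ)
      calc 4*c*sfn m c (P σ p)*‖Yv P σ p i‖ ≤ (4*c*(2*iq))*M :=
            mul_le_mul h1 h2 (norm_nonneg _) (by positivity)
        _ = 8*c*iq*M := by ring
    have h := curve_diff_bound (f := fun σ => Yv X σ p i)
      (f' := fun σ => (fun j' => fderiv ℝ (fun q => Gfun m c P j' (σ, q)) p (Pi.single i 1)))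
      hYode hYFb2 hτ hTb0.le
    simpa [hYt] using h
  -- conclusion
  rw [htarget]
  have hmain := h_deriv_bound hm hc hK.le hE hB hX hP hEb hBb hE' hB' τ p i j
  have hs0 : 0 ≤ sfn m c (P τ p) := sfn_nonneg _
  have hZτ : ‖Yv P τ p i‖ ≤ M := (hZsnd τ).trans (hVnorm τ hτ)
  have hsw : sfn m c (P τ p) ≤ 2*iq := hwin τ hτ
  calc |fderiv ℝ (fun q => hfun m c E B X P j (τ, q)) p (Pi.single i 1)|
      ≤ c*K*(36 * sfn m c (P τ p) * ‖Yv X τ p i‖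
          + 140 * (sfn m c (P τ p))^2 * ‖Yv P τ p i‖) := hmain
    _ ≤ c*K*(36 * (2*iq) * (8*c*iq*M*Tb) + 140 * (2*iq)^2 * M) := by
        refine mul_le_mul_of_nonneg_left ?_ (by positivity)
        have t1 : 36 * sfn m c (P τ p) * ‖Yv X τ p i‖ ≤ 36 * (2*iq) * (8*c*iq*M*Tb) := by
          refine mul_le_mul (mul_le_mul_of_nonneg_left hsw (by norm_num)) hYref
            (norm_nonneg _) (by positivity)
        have t2 : 140 * (sfn m c (P τ p))^2 * ‖Yv P τ p i‖ ≤ 140 * (2*iq)^2 * M := by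
          refine mul_le_mul (mul_le_mul_of_nonneg_left ?_ (by norm_num)) hZτ
            (norm_nonneg _) (by positivity)
          exact pow_le_pow_left₀ hs0 hsw 2
        linarith
    _ = c*K*M*iq^2*(576*(c*Tb) + 560) := by ring
    _ ≤ c*K*M*iq^2*(1200*(c*Tb) + 1200) := by
        have hct : 0 < c*Tb := mul_pos hc hTb0
        have hnn : (0:ℝ) ≤ c*K*M*iq^2 := by positivity
        nlinarith
    _ = 1200*K*M*(c*Tb + 1)*c*iq^2 := by ring
    _ = 1200*K*M*(c*Tb + 1)*c/(Real.sqrt (m^2*c^2 + dot3 p p))^2 := by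
        rw [div_eq_mul_inv, ← inv_pow, hiqdef]
end main
end
end
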